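/- arXiv:1807.09389 — 7 statements merged into one kernel-verified Lean document; each statement's English description precedes it below -/
import Mathlib

section
/- If k_1, …, k_t are nonnegative integers with k_i ≤ n/2 for all i and Σ_i k_i = n − 1 for some integer n ≥ 1, then Σ_{i<j} k_i k_j ≥ (n−1)(n−2)/4. -/
open Finset

lemma sq_sum_eq_aux {t : ℕ} (a : Fin t → ℝ) :
    (∑ i, a i) ^ 2 =
      (∑ i, a i ^ 2) +
        2 * ∑ p ∈ Finset.univ.filter (fun p : Fin t × Fin t => p.1 < p.2), a p.1 * a p.2 := by
  have h1 : (∑ i, a i) ^ 2 = ∑ p ∈ (univ ×ˢ univ : Finset (Fin t × Fin t)), a p.1 * a p.2 := by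
    rw [sq, Finset.sum_mul_sum, Finset.sum_product]
  have hsplit := Finset.sum_filter_add_sum_filter_not
    (univ ×ˢ univ : Finset (Fin t × Fin t)) (fun p => p.1 < p.2) (fun p => a p.1 * a p.2)
  have hsplit2 := Finset.sum_filter_add_sum_filter_not
    ((univ ×ˢ univ : Finset (Fin t × Fin t)).filter (fun p => ¬ p.1 < p.2))
    (fun p => p.2 < p.1) (fun p => a p.1 * a p.2)
  have heq : ∑ p ∈ ((univ ×ˢ univ : Finset (Fin t × Fin t)).filter
      (fun p => ¬ p.1 < p.2)).filter (fun p => ¬ p.2 < p.1), a p.1 * a p.2 = ∑ i, a i ^ 2 := by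
    rw [Finset.filter_filter]
    refine Finset.sum_nbij' (fun p => p.1) (fun i => (i, i)) ?_ ?_ ?_ ?_ ?_
    · intro p hp
      simp at hp ⊢
    · intro i hi; simp
    · intro p hp
      simp only [mem_filter] at hp
      have : p.1 = p.2 := le_antisymm (not_lt.1 hp.2.2) (not_lt.1 hp.2.1)
      cases p; simp_all
    · intro i hi; rfl
    · intro p hp
      simp only [mem_filter] at hp
      have : p.1 = p.2 := le_antisymm (not_lt.1 hp.2.2) (not_lt.1 hp.2.1)
      simp [this, sq]
  have hgt : ∑ p ∈ ((univ ×ˢ univ : Finset (Fin t × Fin t)).filter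
      (fun p => ¬ p.1 < p.2)).filter (fun p => p.2 < p.1), a p.1 * a p.2 =
      ∑ p ∈ (univ ×ˢ univ : Finset (Fin t × Fin t)).filter (fun p => p.1 < p.2),
        a p.1 * a p.2 := by
    rw [Finset.filter_filter]
    refine Finset.sum_nbij' (fun p => (p.2, p.1)) (fun p => (p.2, p.1)) ?_ ?_ ?_ ?_ ?_
    · intro p hp; simp only [mem_filter] at hp ⊢
      exact ⟨by simp, hp.2.2⟩
    · intro p hp; simp only [mem_filter] at hp ⊢
      exact ⟨by simp, not_lt.2 hp.2.le, hp.2⟩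
    · intro p _; rfl
    · intro p _; rfl
    · intro p _; exact mul_comm _ _
  have hfilt : (univ ×ˢ univ : Finset (Fin t × Fin t)).filter (fun p => p.1 < p.2) =
      Finset.univ.filter (fun p : Fin t × Fin t => p.1 < p.2) := by
    congr 1
  rw [h1, ← hsplit, ← hsplit2, heq, hgt, hfilt]
  ring

/-- If `k₁, …, k_t` are nonnegative integers with `kᵢ ≤ n / 2` for all `i` and
`∑ kᵢ = n - 1` for an integer `n ≥ 1`, then `∑_{i<j} kᵢ kⱼ ≥ (n-1)(n-2)/4`. -/
theorem sum_pairwise_products_lower_bound (n t : ℕ) (hn : 1 ≤ n) (ht : 1 ≤ t)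
    (k : Fin t → ℕ) (hk : ∀ i, (k i : ℝ) ≤ (n : ℝ) / 2)
    (hsum : (∑ i, (k i : ℝ)) = (n : ℝ) - 1) :
    ((n : ℝ) - 1) * ((n : ℝ) - 2) / 4 ≤
      ∑ p ∈ Finset.univ.filter (fun p : Fin t × Fin t => p.1 < p.2), (k p.1 : ℝ) * (k p.2 : ℝ) := by
  have hid := sq_sum_eq_aux (fun i => (k i : ℝ))
  have hsq : (∑ i, (k i : ℝ) ^ 2) ≤ (n : ℝ) / 2 * ((n : ℝ) - 1) := by
    calc (∑ i, (k i : ℝ) ^ 2) ≤ ∑ i, (n : ℝ) / 2 * (k i : ℝ) := by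
          apply Finset.sum_le_sum
          intro i _
          rw [sq]
          exact mul_le_mul_of_nonneg_right (hk i) (Nat.cast_nonneg _)
      _ = (n : ℝ) / 2 * ((n : ℝ) - 1) := by rw [← Finset.mul_sum, hsum]
  have hn1 : (1 : ℝ) ≤ (n : ℝ) := by exact_mod_cast hn
  rw [hsum] at hid
  nlinarith [hid, hsq]
end

section
/- Under the hypotheses k_i ≤ n/2 and Σ k_i = n − 1, the quantity C = (2/n)·Σ_{i<j} k_i k_j + (2n−1)/n satisfies C ≥ (n+1)/2. -/
lemma sq_sum_identity {t : ℕ} (k : Fin t → ℝ) :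
    (∑ i, k i) ^ 2 = (∑ i, k i ^ 2) +
      2 * (∑ p ∈ Finset.univ.filter (fun p : Fin t × Fin t => p.1 < p.2), k p.1 * k p.2) := by
  have h0 : (∑ i, k i) ^ 2 = ∑ p : Fin t × Fin t, k p.1 * k p.2 := by
    rw [sq, Finset.sum_mul_sum, ← Finset.univ_product_univ, Finset.sum_product]
  have hsplit := Finset.sum_filter_add_sum_filter_not (Finset.univ : Finset (Fin t × Fin t))
    (fun p => p.1 < p.2) (fun p => k p.1 * k p.2)
  have hsplit2 := Finset.sum_filter_add_sum_filter_not
    (Finset.univ.filter (fun p : Fin t × Fin t => ¬ p.1 < p.2))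
    (fun p => p.2 < p.1) (fun p => k p.1 * k p.2)
  have hgt : (∑ p ∈ (Finset.univ.filter (fun p : Fin t × Fin t => ¬ p.1 < p.2)).filter
      (fun p => p.2 < p.1), k p.1 * k p.2)
      = ∑ p ∈ Finset.univ.filter (fun p : Fin t × Fin t => p.1 < p.2), k p.1 * k p.2 := by
    apply Finset.sum_nbij' (fun p => Prod.swap p) (fun p => Prod.swap p) <;>
      simp +contextual [Prod.swap, le_of_lt, not_lt, mul_comm]
  have hdiag : (∑ p ∈ (Finset.univ.filter (fun p : Fin t × Fin t => ¬ p.1 < p.2)).filter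
      (fun p => ¬ p.2 < p.1), k p.1 * k p.2) = ∑ i, k i ^ 2 := by
    have heq : ∀ p : Fin t × Fin t,
        p ∈ (Finset.univ.filter (fun p : Fin t × Fin t => ¬ p.1 < p.2)).filter
          (fun p => ¬ p.2 < p.1) → p.1 = p.2 := by
      intro p hp
      simp only [Finset.mem_filter, not_lt] at hp
      exact le_antisymm hp.2 hp.1.2
    apply Finset.sum_nbij' (fun p => p.1) (fun i => (i, i))
    · intro p hp; simp
    · intro i hi; simp
    · intro p hp; exact Prod.ext rfl (heq p hp)
    · intro i hi; rfl
    · intro p hp; rw [sq, heq p hp]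
  rw [h0, ← hsplit, ← hsplit2, hgt, hdiag]; ring

/-- Under the hypotheses `kᵢ ≤ n / 2` and `∑ kᵢ = n - 1`, the quantity
`C = (2/n) · ∑_{i<j} kᵢ kⱼ + (2n - 1)/n` satisfies `C ≥ (n + 1)/2`. -/
theorem dual_contribution_lower_bound (n : ℕ) (hn : 1 ≤ n) (t : ℕ)
    (k : Fin t → ℝ) (hk0 : ∀ i, 0 ≤ k i) (hk : ∀ i, k i ≤ (n : ℝ) / 2)
    (hsum : (∑ i, k i) = (n : ℝ) - 1) :
    ((n : ℝ) + 1) / 2 ≤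
      (2 / (n : ℝ)) * (∑ p ∈ Finset.univ.filter (fun p : Fin t × Fin t => p.1 < p.2), k p.1 * k p.2)
        + (2 * (n : ℝ) - 1) / (n : ℝ) := by
  have hn0 : (0 : ℝ) < n := by exact_mod_cast hn
  have hsq : (∑ i, k i ^ 2) ≤ ((n : ℝ) / 2) * ((n : ℝ) - 1) := by
    calc (∑ i, k i ^ 2) ≤ ∑ i, ((n : ℝ) / 2) * k i := by
          apply Finset.sum_le_sum
          intro i _
          rw [sq]
          exact mul_le_mul_of_nonneg_right (hk i) (hk0 i)
      _ = ((n : ℝ) / 2) * ((n : ℝ) - 1) := by rw [← Finset.mul_sum, hsum]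
  have hid := sq_sum_identity k
  rw [hsum] at hid
  have hS : ((n : ℝ) - 1) ^ 2 - ((n : ℝ) / 2) * ((n : ℝ) - 1) ≤
      2 * (∑ p ∈ Finset.univ.filter (fun p : Fin t × Fin t => p.1 < p.2), k p.1 * k p.2) := by
    nlinarith
  rw [div_mul_eq_mul_div, ← add_div, div_le_div_iff₀ (by norm_num) hn0]
  nlinarith
end

section
/- For real x ≥ 1, t ≥ 1 and real p ≥ 1, we have (x + t)^p − x^p ≤ e^{t(p−1)/x} · t · p · x^{p−1}. -/
/-- For reals `x ≥ 1`, `t ≥ 1` and `p ≥ 1`: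
`(x + t)^p - x^p ≤ e^(t(p-1)/x) · t · p · x^(p-1)`. -/
theorem rpow_diff_upper_bound (x t p : ℝ) (hx : 1 ≤ x) (ht : 1 ≤ t) (hp : 1 ≤ p) :
    (x + t) ^ p - x ^ p ≤ Real.exp (t * (p - 1) / x) * t * p * x ^ (p - 1) := by
  have hx0 : (0:ℝ) < x := by linarith
  have ht0 : (0:ℝ) < t := by linarith
  have hxt : (0:ℝ) < x + t := by linarith
  -- Step 1: (x+t)^p - x^p ≤ p * t * (x+t)^(p-1)
  have h1 : (x + t) ^ p - x ^ p ≤ p * t * (x + t) ^ (p - 1) := by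
    have hs : (-1:ℝ) ≤ -(t / (x + t)) := by
      rw [neg_le, neg_neg, div_le_one hxt]; linarith
    have hb := one_add_mul_self_le_rpow_one_add hs hp
    have h1s : (1 : ℝ) + -(t / (x + t)) = x / (x + t) := by field_simp; ring
    rw [h1s] at hb
    have h2 := mul_le_mul_of_nonneg_left hb (Real.rpow_pos_of_pos hxt p).le
    rw [Real.div_rpow hx0.le hxt.le, mul_div_cancel₀ _ (Real.rpow_pos_of_pos hxt p).ne'] at h2
    have hsub : (x + t) ^ p * (p * (t / (x + t))) = p * t * (x + t) ^ (p - 1) := by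
      rw [Real.rpow_sub hxt, Real.rpow_one]
      field_simp
    nlinarith [h2, hsub]
  -- Step 2: (x+t)^(p-1) ≤ exp (t*(p-1)/x) * x^(p-1)
  have h2 : (x + t) ^ (p - 1) ≤ Real.exp (t * (p - 1) / x) * x ^ (p - 1) := by
    rw [Real.rpow_def_of_pos hxt, Real.rpow_def_of_pos hx0, ← Real.exp_add]
    apply Real.exp_le_exp.mpr
    have hlog : Real.log ((x + t) / x) ≤ t / x := by
      have := Real.log_le_sub_one_of_pos (show (0:ℝ) < (x + t)/x from div_pos hxt hx0)
      have : Real.log ((x + t) / x) ≤ (x + t)/x - 1 := this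
      have hd : (x + t)/x - 1 = t / x := by field_simp; ring
      linarith [hd ▸ this]
    have hlog2 : Real.log (x + t) - Real.log x ≤ t / x := by
      rwa [Real.log_div hxt.ne' hx0.ne'] at hlog
    have hp1 : 0 ≤ p - 1 := by linarith
    have hm := mul_le_mul_of_nonneg_right hlog2 hp1
    have : t / x * (p - 1) = t * (p - 1) / x := by ring
    nlinarith [hm]
  calc (x + t) ^ p - x ^ p ≤ p * t * (x + t) ^ (p - 1) := h1
    _ ≤ p * t * (Real.exp (t * (p - 1) / x) * x ^ (p - 1)) := by
        apply mul_le_mul_of_nonneg_left h2; positivity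
    _ = Real.exp (t * (p - 1) / x) * t * p * x ^ (p - 1) := by ring
end

section
/- If H is a feasible hub labeling of a tree T, and for each vertex u the subtree T_u is defined as the union of the paths P_{uv} over all v ∈ H_u, then any two such subtrees intersect: T_u ∩ T_v ≠ ∅ for all u, v; consequently all the subtrees T_u share a common vertex. -/
open SimpleGraph Walk

/-- `H` is a (feasible) hub labeling of `G`. -/
def IsHubLabeling {V : Type*} (G : SimpleGraph V) (H : V → Set V) : Prop :=
  ∀ u v : V, ∃ w, w ∈ H u ∧ w ∈ H v ∧ ∀ p : G.Walk u v, p.IsPath → w ∈ p.support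

/-- The subtree `T_u`: the union of the (unique) paths `P_{uv}` over all hubs `v ∈ H u`. -/
def hubSubtree {V : Type*} (G : SimpleGraph V) (H : V → Set V) (u : V) : Set V :=
  {w | ∃ v ∈ H u, ∀ p : G.Walk u v, p.IsPath → w ∈ p.support}

section aux

variable {V : Type*} {G : SimpleGraph V}

/-- The unique path between two vertices of a tree. -/
noncomputable def thePath (hG : G.IsTree) (u v : V) : G.Walk u v :=
  letI := Classical.decEq V
  ((hG.isConnected.preconnected u v).some).bypass

lemma thePath_isPath (hG : G.IsTree) (u v : V) : (thePath hG u v).IsPath := by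
  unfold thePath
  letI := Classical.decEq V
  exact Walk.bypass_isPath _

lemma eq_thePath (hG : G.IsTree) {u v : V} (p : G.Walk u v) (hp : p.IsPath) :
    p = thePath hG u v := by
  have := hG.2.path_unique ⟨p, hp⟩ ⟨thePath hG u v, thePath_isPath hG u v⟩
  exact congrArg Subtype.val this

lemma mem_hubSubtree (hG : G.IsTree) {H : V → Set V} {u w : V} :
    w ∈ hubSubtree G H u ↔ ∃ v ∈ H u, w ∈ (thePath hG u v).support := by
  constructor
  · rintro ⟨v, hv, hw⟩
    exact ⟨v, hv, hw _ (thePath_isPath hG u v)⟩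
  · rintro ⟨v, hv, hw⟩
    refine ⟨v, hv, fun p hp => ?_⟩
    rwa [eq_thePath hG p hp]

lemma support_sub (hG : G.IsTree) {u v a : V} (ha : a ∈ (thePath hG u v).support) :
    (thePath hG u a).support ⊆ (thePath hG u v).support := by
  classical
  have h1 : (thePath hG u v).takeUntil a ha = thePath hG u a :=
    eq_thePath hG _ ((thePath_isPath hG u v).takeUntil ha)
  rw [← h1]
  exact Walk.support_takeUntil_subset _ ha

lemma union_sub (hG : G.IsTree) (u a b : V) :
    ∀ x ∈ (thePath hG a b).support,
      x ∈ (thePath hG u a).support ∨ x ∈ (thePath hG u b).support := by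
  intro x hx
  classical
  set W := (thePath hG u a).reverse.append (thePath hG u b) with hWdef
  have hb : W.bypass = thePath hG a b := eq_thePath hG _ (Walk.bypass_isPath W)
  have hxW : x ∈ W.support := by
    rw [← hb] at hx
    exact Walk.support_bypass_subset _ hx
  rw [hWdef, Walk.mem_support_append_iff, Walk.support_reverse] at hxW
  rcases hxW with h | h
  · exact Or.inl (List.mem_reverse.mp h)
  · exact Or.inr h

lemma len_le (hG : G.IsTree) {u a z : V} (h : a ∈ (thePath hG u z).support) :
    (thePath hG u a).length ≤ (thePath hG u z).length := by
  classical
  have h1 : (thePath hG u z).takeUntil a h = thePath hG u a :=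
    eq_thePath hG _ ((thePath_isPath hG u z).takeUntil h)
  rw [← h1]
  exact Walk.length_takeUntil_le _ h

lemma eq_of_len (hG : G.IsTree) {u a z : V} (h : a ∈ (thePath hG u z).support)
    (hl : (thePath hG u z).length ≤ (thePath hG u a).length) : a = z := by
  classical
  have hsplit := Walk.take_spec (thePath hG u z) h
  have h1 : (thePath hG u z).takeUntil a h = thePath hG u a :=
    eq_thePath hG _ ((thePath_isPath hG u z).takeUntil h)
  have hlen : (thePath hG u a).length + ((thePath hG u z).dropUntil a h).length
      = (thePath hG u z).length := by
    rw [← h1, ← Walk.length_append, hsplit]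
  have : ((thePath hG u z).dropUntil a h).length = 0 := by omega
  exact Walk.eq_of_length_eq_zero this

lemma append_isPath' {u v w : V} {p : G.Walk u v} {q : G.Walk v w} (hp : p.IsPath)
    (hq : q.IsPath) (h : ∀ x ∈ p.support, x ∈ q.support → x = v) :
    (p.append q).IsPath := by
  rw [Walk.isPath_def, Walk.support_append]
  refine List.Nodup.append hp.support_nodup ((List.tail_sublist _).nodup hq.support_nodup) ?_
  intro a ha hat
  have haq : a ∈ q.support := List.mem_of_mem_tail hat
  have hav : a = v := h a ha haq
  subst hav
  have := hq.support_nodup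
  rw [q.support_eq_cons] at this
  exact (List.nodup_cons.mp this).1 hat

lemma firstHit {a b : V} (p : G.Walk a b) (S : Set V) (hb : b ∈ S) :
    ∃ m ∈ S, ∃ (q : G.Walk a m) (r : G.Walk m b),
      p = q.append r ∧ ∀ x ∈ q.support, x ∈ S → x = m := by
  classical
  induction p with
  | nil =>
    refine ⟨_, hb, Walk.nil, Walk.nil, rfl, ?_⟩
    intro x hx _
    simpa using hx
  | @cons a c b h p ih =>
    by_cases ha : a ∈ S
    · exact ⟨a, ha, Walk.nil, Walk.cons h p, rfl, by simp⟩
    · obtain ⟨m, hm, q, r, heq, hq⟩ := ih hb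
      refine ⟨m, hm, Walk.cons h q, r, by rw [heq, Walk.cons_append], ?_⟩
      intro x hx hxS
      rw [Walk.support_cons, List.mem_cons] at hx
      rcases hx with rfl | hx
      · exact absurd hxS ha
      · exact hq x hx hxS

lemma median (hG : G.IsTree) (r g y : V) :
    ∃ m, m ∈ (thePath hG r g).support ∧ m ∈ (thePath hG r y).support ∧
      m ∈ (thePath hG g y).support := by
  classical
  obtain ⟨m, hmS, q, rr, hsplit, hq⟩ :=
    firstHit (thePath hG g y) {x | x ∈ (thePath hG r y).support} (Walk.end_mem_support _)
  have hqP : q.IsPath := by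
    have := thePath_isPath hG g y
    rw [hsplit] at this
    exact this.of_append_left
  have hmgy : m ∈ (thePath hG g y).support := by
    rw [hsplit]
    exact Walk.subset_support_append_left _ _ (Walk.end_mem_support q)
  set C := (thePath hG r y).takeUntil m hmS with hC
  have hCP : C.IsPath := (thePath_isPath hG r y).takeUntil hmS
  have hjunction : ∀ x ∈ C.support, x ∈ q.reverse.support → x = m := by
    intro x hxC hxq
    rw [Walk.support_reverse, List.mem_reverse] at hxq
    exact hq x hxq (Walk.support_takeUntil_subset _ hmS hxC)
  have hW : (C.append q.reverse).IsPath := append_isPath' hCP hqP.reverse hjunction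
  have hWeq : C.append q.reverse = thePath hG r g := eq_thePath hG _ hW
  refine ⟨m, ?_, hmS, hmgy⟩
  rw [← hWeq]
  exact Walk.subset_support_append_left _ _ (Walk.end_mem_support C)

lemma convex (hG : G.IsTree) {H : V → Set V} {u a b : V}
    (ha : a ∈ hubSubtree G H u) (hb : b ∈ hubSubtree G H u) :
    ∀ x ∈ (thePath hG a b).support, x ∈ hubSubtree G H u := by
  intro x hx
  rw [mem_hubSubtree hG] at ha hb ⊢
  obtain ⟨va, hva, haP⟩ := ha
  obtain ⟨vb, hvb, hbP⟩ := hb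
  rcases union_sub hG u a b x hx with h | h
  · exact ⟨va, hva, support_sub hG haP h⟩
  · exact ⟨vb, hvb, support_sub hG hbP h⟩

end aux

/-- For a feasible hub labeling `H` of a tree, the subtrees `T_u = ⋃_{v ∈ H u} P_{uv}`
pairwise intersect, and consequently (Helly property) all of them share a common vertex. -/
theorem hub_subtrees_intersect {V : Type*} [Fintype V] [Nonempty V]
    (G : SimpleGraph V) (hG : G.IsTree) (H : V → Set V) (hH : IsHubLabeling G H) :
    (∀ u v : V, (hubSubtree G H u ∩ hubSubtree G H v).Nonempty) ∧
      (⋂ u : V, hubSubtree G H u).Nonempty := by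
  classical
  -- the easy pairwise statement
  have hpair : ∀ u v : V, ∃ w, w ∈ hubSubtree G H u ∧ w ∈ hubSubtree G H v := by
    intro u v
    obtain ⟨w, hwu, hwv, -⟩ := hH u v
    exact ⟨w, ⟨w, hwu, fun p _ => p.end_mem_support⟩,
      ⟨w, hwv, fun p _ => p.end_mem_support⟩⟩
  refine ⟨fun u v => (hpair u v).imp fun w hw => ⟨hw.1, hw.2⟩, ?_⟩
  -- each subtree is nonempty
  have hne : ∀ u : V, (hubSubtree G H u).Nonempty := fun u => (hpair u u).imp fun w hw => hw.1
  -- fix a root and pick, in each subtree, a vertex closest to the root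
  obtain ⟨r⟩ : Nonempty V := inferInstance
  have hmin : ∀ u : V, ∃ g ∈ hubSubtree G H u,
      ∀ x ∈ hubSubtree G H u, (thePath hG r g).length ≤ (thePath hG r x).length := fun u =>
    Set.exists_min_image (hubSubtree G H u) (fun x => (thePath hG r x).length)
      (Set.toFinite _) (hne u)
  choose g hgT hgmin using hmin
  -- gate property
  have hgate : ∀ u y, y ∈ hubSubtree G H u → g u ∈ (thePath hG r y).support := by
    intro u y hy
    obtain ⟨m, hm_rg, hm_ry, hm_gy⟩ := median hG r (g u) y
    have hmT : m ∈ hubSubtree G H u := convex hG (hgT u) hy m hm_gy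
    have : m = g u := eq_of_len hG hm_rg (hgmin u m hmT)
    rwa [← this]
  -- pick the gate farthest from the root
  obtain ⟨u₀, hu₀⟩ := Finite.exists_max fun u => (thePath hG r (g u)).length
  refine ⟨g u₀, Set.mem_iInter.mpr fun u => ?_⟩
  obtain ⟨y, hyu, hyu₀⟩ := hpair u u₀
  have h1 : g u₀ ∈ (thePath hG r y).support := hgate u₀ y hyu₀
  have h2 : g u ∈ (thePath hG r y).support := hgate u y hyu
  rw [← Walk.take_spec (thePath hG r y) h2, Walk.mem_support_append_iff] at h1
  rcases h1 with h1 | h1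
  · -- g u₀ lies on the path from r to g u : it must equal g u
    have htake : (thePath hG r y).takeUntil (g u) h2 = thePath hG r (g u) :=
      eq_thePath hG _ ((thePath_isPath hG r y).takeUntil h2)
    rw [htake] at h1
    have : g u₀ = g u := eq_of_len hG h1 (hu₀ u)
    rw [this]; exact hgT u
  · -- g u₀ lies on the path from g u to y, which is inside T_u by convexity
    have hdrop : (thePath hG r y).dropUntil (g u) h2 = thePath hG (g u) y :=
      eq_thePath hG _ ((thePath_isPath hG r y).dropUntil h2)
    rw [hdrop] at h1
    exact convex hG (hgT u) hyu (g u₀) h1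
end

section
/- Restrictions of a hub labeling to disjoint subtrees are feasible and cost-superadditive: if T is a tree partitioned into vertex-disjoint subtrees T_1, …, T_j, and H is a feasible hub labeling of T, then for each i the restriction H^{(i)}_u = H_u ∩ V(T_i) (for u ∈ T_i) is a feasible hub labeling of T_i, and hence Σ_i OPT_p(T_i)^p ≤ OPT_p(T)^p for any p ≥ 1, where OPT_p denotes the minimum ℓ_p-cost raised appropriately. -/
/-- `OPT_p(G)^p`: the minimum over feasible hub labelings `H` of `∑_u |H_u|^p`. -/
noncomputable def OPTpPow {V : Type*} (G : SimpleGraph V) (p : ℝ) : ℝ :=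
  sInf {c : ℝ | ∃ H : V → Set V, IsHubLabeling G H ∧
    c = ∑ᶠ u : V, (Nat.card (H u) : ℝ) ^ p}

/-- The restriction of a feasible hub labeling to a connected induced subgraph is feasible. -/
lemma restrict_isHubLabeling {V : Type*} (G : SimpleGraph V) (s : Set V)
    (hconn : (G.induce s).Connected) (H : V → Set V) (hH : IsHubLabeling G H) :
    IsHubLabeling (G.induce s)
      (fun u : ↥s => {v : ↥s | (v : V) ∈ H (u : V)}) := by
  classical
  intro u v
  obtain ⟨w, hwu, hwv, hw⟩ := hH u v
  set f : G.induce s →g G := (SimpleGraph.Embedding.induce s).toHom with hf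
  have hfinj : Function.Injective f := Subtype.coe_injective
  -- a path between u and v inside the induced subgraph
  obtain ⟨q⟩ := hconn.preconnected u v
  have hq : (SimpleGraph.Walk.map f q.toPath.val).IsPath :=
    SimpleGraph.Walk.map_isPath_of_injective hfinj q.toPath.prop
  have hws : w ∈ (SimpleGraph.Walk.map f q.toPath.val).support := hw _ hq
  rw [SimpleGraph.Walk.support_map] at hws
  obtain ⟨x, _, hxw⟩ := List.mem_map.1 hws
  have hwmem : w ∈ s := hxw ▸ x.2
  refine ⟨⟨w, hwmem⟩, hwu, hwv, ?_⟩
  intro r hr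
  have hr' : w ∈ (SimpleGraph.Walk.map f r).support := hw (SimpleGraph.Walk.map f r)
    (SimpleGraph.Walk.map_isPath_of_injective hfinj hr)
  rw [SimpleGraph.Walk.support_map] at hr'
  obtain ⟨y, hy, hyw⟩ := List.mem_map.1 hr'
  have : y = ⟨w, hwmem⟩ := Subtype.ext hyw
  rwa [this] at hy

/-- Restrictions of a hub labeling to vertex-disjoint subtrees partitioning a tree are
feasible, and hence `∑ᵢ OPT_p(Tᵢ)^p ≤ OPT_p(T)^p` for every `p ≥ 1`. -/
theorem restriction_feasible_and_superadditive {V : Type*} [Fintype V]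
    (G : SimpleGraph V) (hG : G.IsTree) (j : ℕ) (S : Fin j → Set V)
    (hdisj : ∀ i i' : Fin j, i ≠ i' → Disjoint (S i) (S i'))
    (hcover : (⋃ i, S i) = Set.univ)
    (hconn : ∀ i, (G.induce (S i)).Connected)
    (H : V → Set V) (hH : IsHubLabeling G H) (p : ℝ) (hp : 1 ≤ p) :
    (∀ i, IsHubLabeling (G.induce (S i))
        (fun u : ↥(S i) => {v : ↥(S i) | (v : V) ∈ H (u : V)})) ∧
    ∑ i, OPTpPow (G.induce (S i)) p ≤ OPTpPow G p := by
  classical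
  have hp0 : 0 ≤ p := le_trans zero_le_one hp
  haveI : ∀ i, Fintype ↥(S i) := fun i => Fintype.ofFinite _
  refine ⟨fun i => restrict_isHubLabeling G (S i) (hconn i) H hH, ?_⟩
  -- index function for the partition
  have hex : ∀ u : V, ∃ i, u ∈ S i := by
    intro u
    have : u ∈ ⋃ i, S i := hcover ▸ Set.mem_univ u
    exact Set.mem_iUnion.1 this
  set g : V → Fin j := fun u => (hex u).choose with hg
  have hgmem : ∀ u, u ∈ S (g u) := fun u => (hex u).choose_spec
  have hmemiff : ∀ u i, u ∈ S i ↔ g u = i := by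
    intro u i
    constructor
    · intro hu
      by_contra hne
      exact (hdisj _ _ hne).ne_of_mem (hgmem u) hu rfl
    · rintro rfl; exact hgmem u
  -- main bound: for every feasible labeling of G, its cost dominates the sum
  refine le_csInf ⟨∑ᶠ u : V, (Nat.card (H u) : ℝ) ^ p, H, hH, rfl⟩ ?_
  rintro c ⟨H', hH', rfl⟩
  have key : ∀ i, OPTpPow (G.induce (S i)) p ≤
      ∑ u : ↥(S i), (Nat.card (H' (u : V)) : ℝ) ^ p := by
    intro i
    have hmem : (∑ᶠ u : ↥(S i),
        (Nat.card {v : ↥(S i) | (v : V) ∈ H' (u : V)} : ℝ) ^ p) ∈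
        {c : ℝ | ∃ H'' : ↥(S i) → Set ↥(S i), IsHubLabeling (G.induce (S i)) H'' ∧
          c = ∑ᶠ u : ↥(S i), (Nat.card (H'' u) : ℝ) ^ p} :=
      ⟨_, restrict_isHubLabeling G (S i) (hconn i) H' hH', rfl⟩
    have h1 : OPTpPow (G.induce (S i)) p ≤
        ∑ᶠ u : ↥(S i), (Nat.card {v : ↥(S i) | (v : V) ∈ H' (u : V)} : ℝ) ^ p :=
      csInf_le ⟨0, fun c hc => by
        obtain ⟨H'', _, rfl⟩ := hc
        exact finsum_nonneg fun u => Real.rpow_nonneg (Nat.cast_nonneg _) p⟩ hmem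
    refine h1.trans ?_
    rw [finsum_eq_sum_of_fintype]
    apply Finset.sum_le_sum
    intro u _
    apply Real.rpow_le_rpow (Nat.cast_nonneg _) _ hp0
    have hcard : Nat.card {v : ↥(S i) | (v : V) ∈ H' (u : V)} ≤
        Nat.card (H' (u : V)) := by
      refine Nat.card_le_card_of_injective
        (fun x => (⟨(x.1 : V), x.2⟩ : H' (u : V))) ?_
      intro a b hab
      have h2 := congrArg Subtype.val hab
      exact Subtype.ext (Subtype.ext h2)
    exact_mod_cast hcard
  calc ∑ i, OPTpPow (G.induce (S i)) p
      ≤ ∑ i, ∑ u : ↥(S i), (Nat.card (H' (u : V)) : ℝ) ^ p :=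
        Finset.sum_le_sum fun i _ => key i
    _ = ∑ᶠ u : V, (Nat.card (H' u) : ℝ) ^ p := by
        rw [finsum_eq_sum_of_fintype]
        rw [← Finset.sum_fiberwise_of_maps_to (fun u _ => Finset.mem_univ (g u))
          (fun u => (Nat.card (H' u) : ℝ) ^ p)]
        refine Finset.sum_congr rfl fun i _ => ?_
        exact (Finset.sum_subtype (Finset.univ.filter fun u => g u = i)
          (fun x => by simpa using (hmemiff x i).symm)
          (fun u => (Nat.card (H' u) : ℝ) ^ p)).symm
end

section
/- The optimal shifted ℓ_p^p hub-labeling cost on trees satisfies the separator recurrence: for every tree T', integer shift t ≥ 0 and real p ≥ 1, OPT[T',t]^p = (1+t)^p + min over vertices r of T' of Σ over components T'' of T' − r of OPT[T'', t+1]^p, where OPT[T',t]^p = min over hierarchical hub labelings H of T' of Σ_{u∈T'} (|H_u| + t)^p. -/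
/-- `H` is hierarchical: there is a partial order `⪯` on `V` with `v ∈ H u → v ⪯ u`. -/
def IsHierarchical {V : Type*} (H : V → Set V) : Prop :=
  ∃ r : V → V → Prop, IsPartialOrder V r ∧ ∀ u v : V, v ∈ H u → r v u

/-- `OPT[G, t]^p`: the minimum over hierarchical hub labelings `H` of `G` of
`∑_u (|H_u| + t)^p`. -/
noncomputable def OPTsh {V : Type*} (G : SimpleGraph V) (t : ℕ) (p : ℝ) : ℝ :=
  sInf {c : ℝ | ∃ H : V → Set V, IsHubLabeling G H ∧ IsHierarchical H ∧
    c = ∑ᶠ u : V, ((Nat.card (H u) : ℝ) + (t : ℝ)) ^ p}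

namespace OPTaux

def costSet {V : Type*} (G : SimpleGraph V) (t : ℕ) (p : ℝ) : Set ℝ :=
  {c : ℝ | ∃ H : V → Set V, IsHubLabeling G H ∧ IsHierarchical H ∧
    c = ∑ᶠ u : V, ((Nat.card (H u) : ℝ) + (t : ℝ)) ^ p}

lemma OPTsh_eq_sInf {V : Type*} (G : SimpleGraph V) (t : ℕ) (p : ℝ) :
    OPTsh G t p = sInf (costSet G t p) := rfl

lemma hhl_exists {V : Type*} [Finite V] (G : SimpleGraph V) :
    ∃ H : V → Set V, IsHubLabeling G H ∧ IsHierarchical H := by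
  classical
  have : Fintype V := Fintype.ofFinite V
  set e := Fintype.equivFin V with he
  refine ⟨fun u => {w | e w ≤ e u}, ?_, ?_⟩
  · intro u v
    rcases le_total (e u) (e v) with h | h
    · exact ⟨u, by simp, h, fun p _ => p.start_mem_support⟩
    · exact ⟨v, h, by simp, fun p _ => p.end_mem_support⟩
  · exact ⟨fun a b => e a ≤ e b,
      { refl := fun a => le_refl _
        trans := fun a b c => le_trans
        antisymm := fun a b h1 h2 => e.injective (le_antisymm h1 h2) },
      fun u v h => h⟩

lemma costSet_nonempty {V : Type*} [Finite V] (G : SimpleGraph V) (t : ℕ) (p : ℝ) :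
    (costSet G t p).Nonempty := by
  obtain ⟨H, h1, h2⟩ := hhl_exists G
  exact ⟨_, H, h1, h2, rfl⟩

lemma costSet_finite {V : Type*} [Finite V] (G : SimpleGraph V) (t : ℕ) (p : ℝ) :
    (costSet G t p).Finite := by
  have : costSet G t p ⊆ Set.range
      (fun H : V → Set V => ∑ᶠ u : V, ((Nat.card (H u) : ℝ) + (t : ℝ)) ^ p) := by
    rintro c ⟨H, -, -, rfl⟩; exact ⟨H, rfl⟩
  exact (Set.finite_range _).subset this

lemma OPTsh_mem {V : Type*} [Finite V] (G : SimpleGraph V) (t : ℕ) (p : ℝ) :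
    ∃ H : V → Set V, IsHubLabeling G H ∧ IsHierarchical H ∧
      OPTsh G t p = ∑ᶠ u : V, ((Nat.card (H u) : ℝ) + (t : ℝ)) ^ p :=
  (costSet_nonempty G t p).csInf_mem (costSet_finite G t p)

lemma OPTsh_le {V : Type*} [Finite V] {G : SimpleGraph V} {t : ℕ} {p : ℝ}
    {H : V → Set V} (h1 : IsHubLabeling G H) (h2 : IsHierarchical H) :
    OPTsh G t p ≤ ∑ᶠ u : V, ((Nat.card (H u) : ℝ) + (t : ℝ)) ^ p :=
  csInf_le (costSet_finite G t p).bddBelow ⟨H, h1, h2, rfl⟩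

end OPTaux

open SimpleGraph

namespace OPTaux

/-- A walk whose support lies in `s` lifts to reachability in the induced subgraph. -/
lemma reachable_induce_of_walk {V : Type*} {G : SimpleGraph V} {s : Set V} :
    ∀ {u v : V} (p : G.Walk u v) (h : ∀ x ∈ p.support, x ∈ s),
      (G.induce s).Reachable ⟨u, h u p.start_mem_support⟩ ⟨v, h v p.end_mem_support⟩ := by
  intro u v p
  induction p with
  | nil => intro h; exact Reachable.refl _
  | @cons a b c hab q ih =>
      intro h
      have ha : a ∈ s := h a (by simp)
      have hb : b ∈ s := h b (by simp)
      have hadj : (G.induce s).Adj ⟨a, ha⟩ ⟨b, hb⟩ := hab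
      exact hadj.reachable.trans (ih (fun x hx => h x (by simp [hx])))

/-- every vertex on a walk is in the connected component of the start. -/
lemma mem_supp_of_mem_support {V : Type*} {G : SimpleGraph V} {u v x : V}
    (p : G.Walk u v) (hx : x ∈ p.support) :
    x ∈ (G.connectedComponentMk u).supp := by
  classical
  have : G.Reachable u x := ⟨p.takeUntil x hx⟩
  simp [ConnectedComponent.mem_supp_iff, ConnectedComponent.eq]
  exact this.symm

lemma finsum_supp_split {W : Type*} [Finite W] (Gp : SimpleGraph W) (g : W → ℝ) :
    ∑ᶠ C : Gp.ConnectedComponent, ∑ᶠ u : C.supp, g ↑u = ∑ᶠ u : W, g u := by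
  classical
  letI : Fintype W := Fintype.ofFinite W
  rw [finsum_eq_sum_of_fintype, finsum_eq_sum_of_fintype]
  have h1 : ∀ C : Gp.ConnectedComponent, ∑ᶠ u : C.supp, g ↑u
      = ∑ u : {a // Gp.connectedComponentMk a = C}, g ↑u := by
    intro C
    rw [finsum_eq_sum_of_fintype]
    exact Finset.sum_equiv (Equiv.subtypeEquivRight (fun x => C.mem_supp_iff x))
      (by simp) (by simp)
  simp_rw [h1]
  exact Fintype.sum_fiberwise _ _

lemma finsum_split_r {V : Type*} [Finite V] (g : V → ℝ) (r : V) :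
    ∑ᶠ u : V, g u = g r + ∑ᶠ u : {v : V | v ≠ r}, g ↑u := by
  classical
  letI : Fintype V := Fintype.ofFinite V
  rw [finsum_eq_sum_of_fintype, finsum_eq_sum_of_fintype, Finset.sum_set_coe]
  have : ({v : V | v ≠ r}).toFinset = Finset.univ.erase r := by
    ext x; simp
  rw [this, ← Finset.add_sum_erase Finset.univ g (Finset.mem_univ r)]

end OPTaux

open SimpleGraph

namespace OPTaux

lemma le_dir {V : Type*} [Fintype V] [Nonempty V]
    (G : SimpleGraph V) (hG : G.IsTree) (t : ℕ) (p : ℝ) (hp : 1 ≤ p) (r : V) :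
    OPTsh G t p ≤ (1 + (t : ℝ)) ^ p +
      ∑ᶠ C : (G.induce {v : V | v ≠ r}).ConnectedComponent,
        OPTsh ((G.induce {v : V | v ≠ r}).induce C.supp) (t + 1) p := by
  classical
  set V' : Set V := {v : V | v ≠ r} with hV'
  set G' : SimpleGraph V' := G.induce V' with hG'
  -- choose optimal labelings on each component
  choose HC hHC1 hHC2 hHC3 using
    fun C : G'.ConnectedComponent => OPTsh_mem (G'.induce C.supp) (t + 1) p
  choose relC hrelC1 hrelC2 using fun C : G'.ConnectedComponent => hHC2 C
  -- notation
  have cptd : True := trivial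
  let cpt : ∀ u : V, u ≠ r → G'.ConnectedComponent :=
    fun u h => G'.connectedComponentMk ⟨u, h⟩
  let M : V → V → Prop := fun v u =>
    ∃ (hu : u ≠ r) (hv : v ≠ r) (hC : cpt v hv = cpt u hu),
      (⟨⟨v, hv⟩, hC⟩ : ↥((cpt u hu).supp)) ∈ HC (cpt u hu) ⟨⟨u, hu⟩, rfl⟩
  let H : V → Set V := fun u => insert r {v | M v u}
  -- transport lemma
  have mem_congr : ∀ {C C' : G'.ConnectedComponent} (h : C = C')
      (x : ↥C.supp) (x' : ↥C'.supp), (↑x : ↥V') = ↑x' →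
      ∀ (y : ↥C.supp) (y' : ↥C'.supp), (↑y : ↥V') = ↑y' →
      (y ∈ HC C x ↔ y' ∈ HC C' x') := by
    rintro C _ rfl x x' hx y y' hy
    cases (Subtype.ext hx : x = x')
    cases (Subtype.ext hy : y = y')
    exact Iff.rfl
  have card_congr : ∀ {C C' : G'.ConnectedComponent} (h : C = C')
      (x : ↥C.supp) (x' : ↥C'.supp), (↑x : ↥V') = ↑x' →
      Nat.card (HC C x) = Nat.card (HC C' x') := by
    rintro C _ rfl x x' hx
    cases (Subtype.ext hx : x = x')
    rfl
  have hrmem : ∀ u, r ∈ H u := fun u => Set.mem_insert _ _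
  -- the hub labeling property
  have hHub : IsHubLabeling G H := by
    intro u v
    by_cases hu : u = r
    · subst hu
      exact ⟨u, hrmem u, hrmem v, fun q _ => q.start_mem_support⟩
    by_cases hv : v = r
    · subst hv
      exact ⟨v, hrmem u, hrmem v, fun q _ => q.end_mem_support⟩
    by_cases hC : cpt v hv = cpt u hu
    · -- same component
      set C := cpt u hu with hCdef
      have hvC : (⟨v, hv⟩ : ↥V') ∈ C.supp := hC
      obtain ⟨w, hw1, hw2, hw3⟩ := hHC1 C ⟨⟨u, hu⟩, rfl⟩ ⟨⟨v, hv⟩, hvC⟩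
      have hwr : (w : ↥V').1 ≠ r := (w : ↥V').2
      refine ⟨((w : ↥V') : V), ?_, ?_, ?_⟩
      · exact Set.mem_insert_iff.2 (Or.inr ⟨hu, hwr, w.2, by
          have := (mem_congr (rfl : C = C) ⟨⟨u, hu⟩, rfl⟩ ⟨⟨u, hu⟩, rfl⟩ rfl
            w ⟨⟨((w : ↥V') : V), hwr⟩, w.2⟩ rfl).1 hw1
          exact this⟩)
      · refine Set.mem_insert_iff.2 (Or.inr ⟨hv, hwr, ?_, ?_⟩)
        · exact (w.2 : _ = C).trans hC.symm
        · exact (mem_congr hC ⟨⟨v, hv⟩, rfl⟩ ⟨⟨v, hv⟩, hvC⟩ rfl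
            ⟨⟨((w : ↥V') : V), hwr⟩, _⟩ w rfl).2 hw2
      · -- on every path
        intro q hq
        -- build the canonical path through the component
        have hreach' : G'.Reachable ⟨u, hu⟩ ⟨v, hv⟩ := ConnectedComponent.exact hC.symm
        obtain ⟨q'⟩ := hreach'
        have hsupp : ∀ x ∈ q'.support, x ∈ C.supp := fun x hx =>
          mem_supp_of_mem_support q' hx
        have hreach2 := reachable_induce_of_walk (s := C.supp) q' hsupp
        have hreach3 : (G'.induce C.supp).Reachable ⟨⟨u, hu⟩, rfl⟩ ⟨⟨v, hv⟩, hvC⟩ := hreach2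
        obtain ⟨q''⟩ := hreach3
        let π := q''.toPath
        have hwπ := hw3 ↑π π.2
        let f2 : G'.induce C.supp →g G' := (Embedding.induce C.supp).toHom
        let f1 : G' →g G := (Embedding.induce V').toHom
        let pg : G.Walk u v := (((π : _) : (G'.induce C.supp).Walk ⟨⟨u, hu⟩, rfl⟩ ⟨⟨v, hv⟩, hvC⟩).map f2).map f1
        have hpg : pg.IsPath := by
          apply Walk.map_isPath_of_injective (Embedding.induce (G := G) V').injective
          exact Walk.map_isPath_of_injective (Embedding.induce (G := G') C.supp).injective π.2
        have : q = pg := by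
          obtain ⟨P, hP1, hP2⟩ := hG.existsUnique_path u v
          rw [hP2 q hq, hP2 pg hpg]
        rw [this, show ((w : ↥V') : V) = f1 (f2 w) from rfl]
        have hmem : f1 (f2 w) ∈ (((π : (G'.induce C.supp).Walk ⟨⟨u, hu⟩, rfl⟩
            ⟨⟨v, hv⟩, hvC⟩).map f2).map f1).support := by
          rw [Walk.support_map, Walk.support_map]
          exact List.mem_map_of_mem (f := f1) (List.mem_map_of_mem (f := f2) hwπ)
        exact hmem
    · -- different components: r works
      refine ⟨r, hrmem u, hrmem v, fun q hq => ?_⟩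
      by_contra hr
      have hsub : ∀ x ∈ q.support, x ∈ V' := fun x hx =>
        (ne_of_mem_of_not_mem hx hr : x ≠ r)
      have := reachable_induce_of_walk (s := V') q hsub
      exact hC (ConnectedComponent.sound this.symm)
  -- rank functions
  let rank : ∀ C : G'.ConnectedComponent, ↥C.supp → ℕ :=
    fun C x => Set.ncard {y : ↥C.supp | relC C y x}
  have rank_congr : ∀ {C C' : G'.ConnectedComponent} (h : C = C')
      (x : ↥C.supp) (x' : ↥C'.supp), (↑x : ↥V') = ↑x' → rank C x = rank C' x' := by
    rintro C _ rfl x x' hx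
    cases (Subtype.ext hx : x = x')
    rfl
  have rank_lt : ∀ (C : G'.ConnectedComponent) (x y : ↥C.supp),
      relC C x y → x ≠ y → rank C x < rank C y := by
    intro C x y hxy hne
    haveI := hrelC1 C
    apply Set.ncard_lt_ncard ?_ (Set.toFinite _)
    rw [Set.ssubset_def]
    constructor
    · intro z hz
      exact trans_of (relC C) hz hxy
    · intro hsub
      have hy : y ∈ {z : ↥C.supp | relC C z x} := hsub (refl_of (relC C) y)
      exact hne (antisymm_of (relC C) hxy hy)
  let R : V → V → Prop := fun a b =>
    a = b ∨ (a = r ∧ b ≠ r) ∨ ∃ (ha : a ≠ r) (hb : b ≠ r) (hCab : cpt a ha = cpt b hb),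
      rank (cpt b hb) ⟨⟨a, ha⟩, hCab⟩ < rank (cpt b hb) ⟨⟨b, hb⟩, rfl⟩
  have hHier : IsHierarchical H := by
    refine ⟨R, { refl := fun a => Or.inl rfl, trans := ?_, antisymm := ?_ }, ?_⟩
    · rintro a b c (rfl | ⟨rfl, hbr⟩ | ⟨ha, hb, hC1, h1⟩) hbc
      · exact hbc
      · rcases hbc with rfl | ⟨h, _⟩ | ⟨_, hc, _, _⟩
        · exact Or.inr (Or.inl ⟨rfl, hbr⟩)
        · exact absurd h hbr
        · exact Or.inr (Or.inl ⟨rfl, hc⟩)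
      · rcases hbc with rfl | ⟨h, _⟩ | ⟨hb', hc, hC2, h2⟩
        · exact Or.inr (Or.inr ⟨ha, hb, hC1, h1⟩)
        · exact absurd h hb
        · refine Or.inr (Or.inr ⟨ha, hc, hC1.trans hC2, ?_⟩)
          have e1 : rank (cpt b hb) ⟨⟨a, ha⟩, hC1⟩
              = rank (cpt c hc) ⟨⟨a, ha⟩, hC1.trans hC2⟩ := rank_congr hC2 _ _ rfl
          have e2 : rank (cpt b hb) ⟨⟨b, hb⟩, rfl⟩
              = rank (cpt c hc) ⟨⟨b, hb⟩, hC2⟩ := rank_congr hC2 _ _ rfl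
          have h1' := h1
          rw [e1, e2] at h1'
          exact h1'.trans_le (le_of_lt h2)
    · rintro a b (rfl | ⟨rfl, hbr⟩ | ⟨ha, hb, hC1, h1⟩) hba
      · rfl
      · rcases hba with rfl | ⟨h, habs⟩ | ⟨hb', ha'', _, _⟩
        · rfl
        · exact absurd rfl habs
        · exact absurd rfl ha''
      · rcases hba with rfl | ⟨h, habs⟩ | ⟨hb', ha', hC2, h2⟩
        · rfl
        · exact absurd h hb
        · exfalso
          have e1 : rank (cpt a ha) ⟨⟨b, hb⟩, hC2⟩
              = rank (cpt b hb) ⟨⟨b, hb⟩, rfl⟩ := rank_congr hC1 _ _ rfl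
          have e2 : rank (cpt a ha) ⟨⟨a, ha⟩, rfl⟩
              = rank (cpt b hb) ⟨⟨a, ha⟩, hC1⟩ := rank_congr hC1 _ _ rfl
          have h2' := h2
          rw [e1, e2] at h2'
          exact lt_asymm h1 h2'
    · intro u v hvH
      rcases Set.mem_insert_iff.1 hvH with hvr | hvM
      · by_cases hu : u = r
        · exact Or.inl (hvr.trans hu.symm)
        · exact Or.inr (Or.inl ⟨hvr, hu⟩)
      · obtain ⟨hu, hv, hC, hmem⟩ := hvM
        have hrel := hrelC2 (cpt u hu) ⟨⟨u, hu⟩, rfl⟩ ⟨⟨v, hv⟩, hC⟩ hmem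
        by_cases hyx : (⟨⟨v, hv⟩, hC⟩ : ↥((cpt u hu).supp)) = ⟨⟨u, hu⟩, rfl⟩
        · exact Or.inl (congrArg (fun z : ↥((cpt u hu).supp) => ((z : ↥V') : V)) hyx)
        · exact Or.inr (Or.inr ⟨hv, hu, hC, rank_lt _ _ _ hrel hyx⟩)
  -- cost computation
  have hHr : H r = {r} := by
    apply Set.eq_singleton_iff_unique_mem.2
    refine ⟨hrmem r, fun x hx => ?_⟩
    rcases Set.mem_insert_iff.1 hx with h | h
    · exact h
    · obtain ⟨h1, -⟩ := h
      exact absurd rfl h1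
  have hHrcard : Nat.card (H r) = 1 := by
    rw [hHr, Nat.card_coe_set_eq, Set.ncard_singleton]
  have key : ∀ C : G'.ConnectedComponent,
      (∑ᶠ x : C.supp, ((Nat.card (H ((x : ↥V') : V)) : ℝ) + (t : ℝ)) ^ p)
        = OPTsh (G'.induce C.supp) (t + 1) p := by
    intro C
    rw [hHC3 C]
    apply finsum_congr
    intro x
    have hximg : {v | M v ((x : ↥V') : V)} =
        (fun y : ↥C.supp => ((y : ↥V') : V)) '' (HC C x) := by
      ext v
      simp only [Set.mem_setOf_eq, Set.mem_image]
      constructor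
      · rintro ⟨hu, hv, hC, hmem⟩
        refine ⟨⟨⟨v, hv⟩, hC.trans x.2⟩, ?_, rfl⟩
        exact (mem_congr x.2 ⟨⟨((x : ↥V') : V), hu⟩, rfl⟩ x rfl
          ⟨⟨v, hv⟩, hC⟩ ⟨⟨v, hv⟩, hC.trans x.2⟩ rfl).1 hmem
      · rintro ⟨y, hy, rfl⟩
        refine ⟨(x : ↥V').2, (y : ↥V').2, y.2.trans x.2.symm, ?_⟩
        exact (mem_congr x.2.symm x ⟨⟨((x : ↥V') : V), (x : ↥V').2⟩, rfl⟩ rfl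
          y ⟨⟨((y : ↥V') : V), (y : ↥V').2⟩, y.2.trans x.2.symm⟩ rfl).1 hy
    have hins : H ((x : ↥V') : V)
        = insert r ((fun y : ↥C.supp => ((y : ↥V') : V)) '' (HC C x)) := by
      show insert r {v | M v _} = _
      rw [hximg]
    have hnot : r ∉ (fun y : ↥C.supp => ((y : ↥V') : V)) '' (HC C x) := by
      rintro ⟨y, -, hy⟩
      exact (y : ↥V').2 hy
    have hcard : Nat.card (H ((x : ↥V') : V)) = Nat.card (HC C x) + 1 := by
      rw [hins, Nat.card_coe_set_eq,
        Set.ncard_insert_of_notMem hnot (Set.toFinite _),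
        Set.ncard_image_of_injective (HC C x) (fun a b h => Subtype.ext (Subtype.ext h)),
        ← Nat.card_coe_set_eq]
    rw [hcard]
    congr 1
    push_cast
    ring
  refine le_trans (OPTsh_le (t := t) (p := p) hHub hHier) (le_of_eq ?_)
  have h2 : ∑ᶠ u : ↥V', ((Nat.card (H ↑u) : ℝ) + (t : ℝ)) ^ p
      = ∑ᶠ C : G'.ConnectedComponent, OPTsh (G'.induce C.supp) (t + 1) p := by
    rw [← finsum_supp_split G' (fun u : ↥V' => ((Nat.card (H ↑u) : ℝ) + (t : ℝ)) ^ p)]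
    exact finsum_congr key
  calc ∑ᶠ u : V, ((Nat.card (H u) : ℝ) + (t : ℝ)) ^ p
      = ((Nat.card (H r) : ℝ) + (t : ℝ)) ^ p
        + ∑ᶠ u : ↥V', ((Nat.card (H ↑u) : ℝ) + (t : ℝ)) ^ p :=
        finsum_split_r (fun u : V => ((Nat.card (H u) : ℝ) + (t : ℝ)) ^ p) r
    _ = (1 + (t : ℝ)) ^ p
        + ∑ᶠ C : G'.ConnectedComponent, OPTsh (G'.induce C.supp) (t + 1) p := by
        rw [hHrcard, h2]; norm_num

end OPTaux


namespace OPTaux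

lemma finsum_mono {α : Type*} [Finite α] {f g : α → ℝ} (h : ∀ a, f a ≤ g a) :
    ∑ᶠ a, f a ≤ ∑ᶠ a, g a := by
  letI : Fintype α := Fintype.ofFinite α
  rw [finsum_eq_sum_of_fintype, finsum_eq_sum_of_fintype]
  exact Finset.sum_le_sum (fun i _ => h i)

lemma ge_dir {V : Type*} [Fintype V] [Nonempty V]
    (G : SimpleGraph V) (hG : G.IsTree) (t : ℕ) (p : ℝ) (hp : 1 ≤ p) :
    ∃ r : V, (1 + (t : ℝ)) ^ p +
      ∑ᶠ C : (G.induce {v : V | v ≠ r}).ConnectedComponent,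
        OPTsh ((G.induce {v : V | v ≠ r}).induce C.supp) (t + 1) p ≤ OPTsh G t p := by
  classical
  have hp0 : 0 ≤ p := le_trans zero_le_one hp
  obtain ⟨H, hHub, hHier, hcost⟩ := OPTsh_mem G t p
  obtain ⟨rel, hrel1, hrel2⟩ := hHier
  haveI := hrel1
  letI PO : PartialOrder V :=
    { le := rel
      le_refl := fun a => refl_of rel a
      le_trans := fun a b c => trans_of rel
      le_antisymm := fun a b => antisymm_of rel }
  obtain ⟨r, -, hrmin⟩ := Finset.exists_minimal
    (⟨Classical.arbitrary V, Finset.mem_univ _⟩ : (Finset.univ : Finset V).Nonempty)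
  have hminr : ∀ x, rel x r → x = r := by
    intro x hx
    by_contra hne
    exact hne (antisymm_of rel hx (hrmin (Finset.mem_univ x) hx))
  have hself : ∀ u, u ∈ H u := by
    intro u
    obtain ⟨w, hw1, -, hw3⟩ := hHub u u
    have := hw3 Walk.nil (Walk.IsPath.nil)
    simp only [Walk.support_nil, List.mem_singleton] at this
    rwa [this] at hw1
  have hrHu : ∀ u, r ∈ H u := by
    intro u
    obtain ⟨w, hw1, hw2, -⟩ := hHub u r
    have : w = r := hminr w (hrel2 r w hw2)
    rwa [this] at hw1
  refine ⟨r, ?_⟩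
  set V' : Set V := {v : V | v ≠ r} with hV'
  set G' : SimpleGraph V' := G.induce V' with hG'
  -- the restricted labelings
  rw [hcost]
  calc (1 + (t : ℝ)) ^ p + ∑ᶠ C : G'.ConnectedComponent,
        OPTsh (G'.induce C.supp) (t + 1) p
      ≤ ((Nat.card (H r) : ℝ) + (t : ℝ)) ^ p
        + ∑ᶠ u : ↥V', ((Nat.card (H ↑u) : ℝ) + (t : ℝ)) ^ p := by
        apply add_le_add
        · apply Real.rpow_le_rpow (by positivity) ?_ hp0
          have h1 : 1 ≤ Nat.card (H r) := Nat.one_le_iff_ne_zero.2 (by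
            have : Nat.card (H r) ≠ 0 := Nat.card_ne_zero.2 ⟨⟨r, hrHu r⟩, Set.toFinite _⟩
            exact this)
          have : (1 : ℝ) ≤ (Nat.card (H r) : ℝ) := by exact_mod_cast h1
          linarith
        · rw [← finsum_supp_split G' (fun u : ↥V' => ((Nat.card (H ↑u) : ℝ) + (t : ℝ)) ^ p)]
          apply finsum_mono
          intro C
          -- restricted labeling on component C
          set HC' : ↥C.supp → Set ↥C.supp :=
            fun x => {y : ↥C.supp | ((y : ↥V') : V) ∈ H ((x : ↥V') : V)} with hHC'
          have hubC : IsHubLabeling (G'.induce C.supp) HC' := by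
            intro x y
            obtain ⟨w, hw1, hw2, hw3⟩ := hHub ((x : ↥V') : V) ((y : ↥V') : V)
            -- construct a canonical path inside the component
            have hreach' : G'.Reachable ↑x ↑y := ConnectedComponent.exact (x.2.trans y.2.symm)
            obtain ⟨q'⟩ := hreach'
            have hsupp : ∀ z ∈ q'.support, z ∈ C.supp := by
              intro z hz
              have := mem_supp_of_mem_support q' hz
              rwa [(x.2 : G'.connectedComponentMk ↑x = C)] at this
            have hreach2 := reachable_induce_of_walk (s := C.supp) q' hsupp
            have hreach3 : (G'.induce C.supp).Reachable x y := by
              convert hreach2 using 2 <;> exact Subtype.ext rfl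
            obtain ⟨q''⟩ := hreach3
            let π := q''.toPath
            let f2 : G'.induce C.supp →g G' := (Embedding.induce (G := G') C.supp).toHom
            let f1 : G' →g G := (Embedding.induce (G := G) V').toHom
            have hpg : (((π : (G'.induce C.supp).Walk x y).map f2).map f1).IsPath := by
              apply Walk.map_isPath_of_injective (Embedding.induce (G := G) V').injective
              exact Walk.map_isPath_of_injective
                (Embedding.induce (G := G') C.supp).injective π.2
            have hwpg : w ∈ (((π : (G'.induce C.supp).Walk x y).map f2).map f1).support := hw3 _ hpg
            rw [Walk.support_map, Walk.support_map] at hwpg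
            obtain ⟨b, hb, rfl⟩ := List.mem_map.1 hwpg
            obtain ⟨z, hz, rfl⟩ := List.mem_map.1 hb
            refine ⟨z, hw1, hw2, ?_⟩
            intro q hq
            have hq' : (((q : (G'.induce C.supp).Walk x y).map f2).map f1).IsPath := by
              apply Walk.map_isPath_of_injective (Embedding.induce (G := G) V').injective
              exact Walk.map_isPath_of_injective
                (Embedding.induce (G := G') C.supp).injective hq
            have hwq : f1 (f2 z) ∈ (((q : (G'.induce C.supp).Walk x y).map f2).map f1).support := hw3 _ hq'
            rw [Walk.support_map, Walk.support_map] at hwq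
            obtain ⟨b', hb', hbeq⟩ := List.mem_map.1 hwq
            obtain ⟨z', hz', rfl⟩ := List.mem_map.1 hb'
            have : z' = z := Subtype.ext (Subtype.ext hbeq)
            rwa [this] at hz'
          have hierC : IsHierarchical HC' := by
            refine ⟨fun a b => rel ((a : ↥V') : V) ((b : ↥V') : V),
              { refl := fun a => refl_of rel _
                trans := fun a b c hab hbc => trans_of rel hab hbc
                antisymm := fun a b hab hba =>
                  Subtype.ext (Subtype.ext (antisymm_of rel hab hba)) }, ?_⟩
            intro a b hb
            exact hrel2 _ _ hb
          refine le_trans (OPTsh_le (t := t + 1) (p := p) hubC hierC) (finsum_mono ?_)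
          intro x
          apply Real.rpow_le_rpow (by positivity) ?_ hp0
          -- cardinality bound
          have hsub : (fun z : ↥C.supp => ((z : ↥V') : V)) '' HC' x
              ⊆ H ((x : ↥V') : V) \ {r} := by
            rintro w ⟨z, hz, rfl⟩
            exact ⟨hz, (z : ↥V').2⟩
          have hcard : Nat.card (HC' x) + 1 ≤ Nat.card (H ((x : ↥V') : V)) := by
            have e1 : Nat.card (HC' x)
                = ((fun z : ↥C.supp => ((z : ↥V') : V)) '' HC' x).ncard := by
              rw [Nat.card_coe_set_eq,
                Set.ncard_image_of_injective _ (fun a b h => Subtype.ext (Subtype.ext h))]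
            have e2 : ((fun z : ↥C.supp => ((z : ↥V') : V)) '' HC' x).ncard
                ≤ (H ((x : ↥V') : V) \ {r}).ncard :=
              Set.ncard_le_ncard hsub (Set.toFinite _)
            have e3 : (H ((x : ↥V') : V) \ {r}).ncard + 1
                = (H ((x : ↥V') : V)).ncard :=
              Set.ncard_diff_singleton_add_one (hrHu _) (Set.toFinite _)
            rw [e1, Nat.card_coe_set_eq, ← e3]
            omega
          have hcard' : ((Nat.card (HC' x) : ℝ)) + 1 ≤ (Nat.card (H ((x : ↥V') : V)) : ℝ) := by
            exact_mod_cast hcard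
          push_cast
          linarith
    _ = ∑ᶠ u : V, ((Nat.card (H u) : ℝ) + (t : ℝ)) ^ p :=
        (finsum_split_r (fun u : V => ((Nat.card (H u) : ℝ) + (t : ℝ)) ^ p) r).symm

end OPTaux

/-- The optimal shifted `ℓ_p^p` hub-labeling cost on trees satisfies the separator
recurrence: `OPT[T', t]^p = (1+t)^p + min_r ∑_{T'' c.c. of T' - r} OPT[T'', t+1]^p`. -/
theorem opt_shifted_recurrence {V : Type*} [Fintype V] [Nonempty V]
    (G : SimpleGraph V) (hG : G.IsTree) (t : ℕ) (p : ℝ) (hp : 1 ≤ p) :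
    OPTsh G t p = (1 + (t : ℝ)) ^ p +
      sInf {s : ℝ | ∃ r : V,
        s = ∑ᶠ C : (G.induce {v : V | v ≠ r}).ConnectedComponent,
          OPTsh ((G.induce {v : V | v ≠ r}).induce C.supp) (t + 1) p} := by
  classical
  set f : V → ℝ := fun r => ∑ᶠ C : (G.induce {v : V | v ≠ r}).ConnectedComponent,
    OPTsh ((G.induce {v : V | v ≠ r}).induce C.supp) (t + 1) p with hf
  have hset : {s : ℝ | ∃ r : V,
      s = ∑ᶠ C : (G.induce {v : V | v ≠ r}).ConnectedComponent,
        OPTsh ((G.induce {v : V | v ≠ r}).induce C.supp) (t + 1) p} = Set.range f := by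
    ext s
    simp only [Set.mem_setOf_eq, Set.mem_range, hf]
    exact ⟨fun ⟨r, h⟩ => ⟨r, h.symm⟩, fun ⟨r, h⟩ => ⟨r, h.symm⟩⟩
  rw [hset]
  apply le_antisymm
  · obtain ⟨r0, hr0⟩ := (Set.range_nonempty f).csInf_mem (Set.finite_range f)
    calc OPTsh G t p ≤ (1 + (t : ℝ)) ^ p + f r0 := OPTaux.le_dir G hG t p hp r0
      _ = (1 + (t : ℝ)) ^ p + sInf (Set.range f) := by rw [hr0]
  · obtain ⟨r1, hr1⟩ := OPTaux.ge_dir G hG t p hp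
    refine le_trans (add_le_add_right ?_ _) hr1
    exact csInf_le (Set.finite_range f).bddBelow ⟨r1, rfl⟩
end

section
/- If P(h,t) satisfies P(0,t) = Path(t+1), P(1,t) = 5 + t + Path(t), and P(h,t) = (2^{h+1} − 1) + t + 2·P(h−2,0) + P(h−1,t+1) for h ≥ 2, then P(h,t) ≤ (4/3)·h·2^h + g(h)·h·2^h + f(h+t) + h·t for all h,t ≥ 0, where f(n) = Path(n+1) + 5, g(h) = C/√h for a suitable absolute constant C (with g(0) interpreted so the base cases hold), and Path(t) = (t+1)⌈log₂(t+1)⌉ − 2^{⌈log₂(t+1)⌉} + 1. In particular P(h,0) = (1 + o(1))·(4/3)·h·2^h as h → ∞. -/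
open Filter

private lemma clog_le_self' (n : ℕ) : Nat.clog 2 n ≤ n :=
  (Nat.clog_le_iff_le_pow one_lt_two).mpr (Nat.lt_two_pow_self (n := n)).le

private lemma twoStep {Q : ℕ → Prop} (h0 : Q 0) (h1 : Q 1)
    (hstep : ∀ n, Q n → Q (n + 1) → Q (n + 2)) : ∀ n, Q n := by
  have key : ∀ n, Q n ∧ Q (n + 1) := by
    intro n
    induction n with
    | zero => exact ⟨h0, h1⟩
    | succ k ih => exact ⟨ih.2, hstep k ih.1 ih.2⟩
  exact fun n => (key n).1

private lemma pow125 (n : ℕ) : 2 ^ n * (n + 2) ^ 2 ≤ 125 * 3 ^ n := by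
  induction n with
  | zero => norm_num
  | succ k ih =>
    rcases Nat.lt_or_ge k 3 with h | h
    · interval_cases k <;> norm_num
    · have h2 : 2 * (k + 1 + 2) ^ 2 ≤ 3 * (k + 2) ^ 2 := by nlinarith
      calc 2 ^ (k + 1) * (k + 1 + 2) ^ 2 = 2 ^ k * (2 * (k + 1 + 2) ^ 2) := by ring
        _ ≤ 2 ^ k * (3 * (k + 2) ^ 2) := Nat.mul_le_mul_left _ h2
        _ = 3 * (2 ^ k * (k + 2) ^ 2) := by ring
        _ ≤ 3 * (125 * 3 ^ k) := Nat.mul_le_mul_left _ ih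
        _ = 125 * 3 ^ (k + 1) := by ring

private lemma pow9 (n : ℕ) : (n + 2) ^ 2 ≤ 9 * 2 ^ n := by
  induction n with
  | zero => norm_num
  | succ k ih =>
    rcases Nat.eq_zero_or_pos k with rfl | hk
    · norm_num
    · have h2 : (k + 1 + 2) ^ 2 ≤ 2 * (k + 2) ^ 2 := by nlinarith
      calc (k + 1 + 2) ^ 2 ≤ 2 * (k + 2) ^ 2 := h2
        _ ≤ 2 * (9 * 2 ^ k) := Nat.mul_le_mul_left _ ih
        _ = 9 * 2 ^ (k + 1) := by ring

section Main
variable (Path : ℕ → ℕ)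
    (hPath : ∀ t, Path t = (t + 1) * Nat.clog 2 (t + 1) - 2 ^ Nat.clog 2 (t + 1) + 1)
include hPath

private lemma path_le (t : ℕ) : Path t ≤ (t + 1) ^ 2 + 1 := by
  rw [hPath]
  have h1 : (t + 1) * Nat.clog 2 (t + 1) - 2 ^ Nat.clog 2 (t + 1) ≤ (t + 1) * (t + 1) :=
    le_trans (Nat.sub_le _ _) (Nat.mul_le_mul_left _ (clog_le_self' _))
  have : (t + 1) * (t + 1) = (t + 1) ^ 2 := by ring
  omega

private lemma path_mono (t : ℕ) : Path t ≤ Path (t + 1) := by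
  rw [hPath t, hPath (t + 1)]
  set n := t + 1 with hn
  have hn1 : 1 ≤ n := by omega
  rcases le_or_gt (n + 1) (2 ^ Nat.clog 2 n) with hle | hlt
  · have hLL : Nat.clog 2 (n + 1) = Nat.clog 2 n :=
      le_antisymm ((Nat.clog_le_iff_le_pow one_lt_two).mpr hle) (Nat.clog_mono_right _ (by omega))
    rw [show t + 1 + 1 = n + 1 from rfl, hLL]
    have : n * Nat.clog 2 n ≤ (n + 1) * Nat.clog 2 n := Nat.mul_le_mul_right _ (by omega)
    omega
  · have hub : n ≤ 2 ^ Nat.clog 2 n := Nat.le_pow_clog one_lt_two n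
    have heq : n = 2 ^ Nat.clog 2 n := by omega
    set L := Nat.clog 2 n with hL
    have hL' : Nat.clog 2 (n + 1) = L + 1 := by
      have h1 : L < Nat.clog 2 (n + 1) := (Nat.lt_clog_iff_pow_lt one_lt_two).mpr (by omega)
      have h2 : Nat.clog 2 (n + 1) ≤ L + 1 := by
        apply (Nat.clog_le_iff_le_pow one_lt_two).mpr
        have : 1 ≤ 2 ^ L := Nat.one_le_two_pow
        rw [pow_succ]
        omega
      omega
    rw [show t + 1 + 1 = n + 1 from rfl, hL']
    rw [pow_succ]
    have e1 : (n + 1) * (L + 1) = n * L + n + L + 1 := by ring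
    rw [e1, ← heq]
    have h2 : n ≤ n * L + n := by omega
    generalize n * L = m at *
    omega

private lemma path_le_real (t : ℕ) : (Path t : ℝ) ≤ ((t : ℝ) + 1) ^ 2 + 1 := by
  have := path_le Path hPath t
  exact_mod_cast this

variable (P : ℕ → ℕ → ℕ)
    (hP0 : ∀ t, P 0 t = Path (t + 1))
    (hP1 : ∀ t, P 1 t = 5 + t + Path t)
    (hPrec : ∀ h t, 
      2 ≤ h → P h t = (2 ^ (h + 1) - 1) + t + 2 * P (h - 2) 0 + P (h - 1) (t + 1))
include hP0 hP1 hPrec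

private lemma upper_bound : ∀ h t : ℕ, (P h t : ℝ) ≤
    4 / 3 * h * 2 ^ h + (300 - 300 * (3 / 4 : ℝ) ^ h) * 2 ^ h
      + (Path (h + t + 1) : ℝ) + 5 + h * t := by
  apply twoStep (Q := fun h => ∀ t : ℕ, (P h t : ℝ) ≤
    4 / 3 * h * 2 ^ h + (300 - 300 * (3 / 4 : ℝ) ^ h) * 2 ^ h
      + (Path (h + t + 1) : ℝ) + 5 + h * t)
  · intro t
    rw [hP0 t]
    push_cast
    norm_num
  · intro t
    rw [hP1 t]
    have hm : (Path t : ℝ) ≤ (Path (1 + t + 1) : ℝ) := by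
      have h1 := path_mono Path hPath t
      have h2 := path_mono Path hPath (t + 1)
      have : Path t ≤ Path (t + 2) := le_trans h1 h2
      have he : 1 + t + 1 = t + 2 := by omega
      rw [he]
      exact_mod_cast this
    push_cast
    nlinarith [hm]
  · intro n IH1 IH2 t
    rw [hPrec (n + 2) t (by omega)]
    have e2 : n + 2 - 2 = n := by omega
    have e1 : n + 2 - 1 = n + 1 := by omega
    rw [e2, e1]
    have hone : (1 : ℕ) ≤ 2 ^ (n + 2 + 1) := Nat.one_le_two_pow
    have I1 := IH1 0
    have I2 := IH2 (t + 1)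
    rw [show n + 0 + 1 = n + 1 from by omega] at I1
    rw [show n + 1 + (t + 1) + 1 = n + 2 + t + 1 from by omega] at I2
    -- key inequality
    have hx : (0 : ℝ) < 2 ^ n := by positivity
    have key : 2 * (Path (n + 1) : ℝ) + n + 10 ≤ 375 * ((3 / 4 : ℝ) ^ n * 2 ^ n) := by
      have hpw : (3 / 4 : ℝ) ^ n * 2 ^ n = (3 / 2 : ℝ) ^ n := by
        rw [← mul_pow]; norm_num
      rw [hpw]
      have hA : ((n : ℝ) + 2) ^ 2 ≤ 125 * (3 / 2 : ℝ) ^ n := by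
        have := pow125 n
        have hc : (2 : ℝ) ^ n * ((n : ℝ) + 2) ^ 2 ≤ 125 * 3 ^ n := by exact_mod_cast this
        have h32 : (3 / 2 : ℝ) ^ n = 3 ^ n / 2 ^ n := div_pow 3 2 n
        rw [h32, ← mul_div_assoc, le_div_iff₀ hx]
        nlinarith [hc]
      have hB : 125 + 125 / 2 * (n : ℝ) ≤ 125 * (3 / 2 : ℝ) ^ n := by
        have := one_add_mul_le_pow (show (-2 : ℝ) ≤ 1 / 2 by norm_num) n
        have h32 : ((1 : ℝ) + 1 / 2) ^ n = (3 / 2 : ℝ) ^ n := by norm_num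
        nlinarith [this]
      have hC := path_le_real Path hPath (n + 1)
      push_cast at hC
      nlinarith [hC, hA, hB, (Nat.cast_nonneg n : (0 : ℝ) ≤ (n : ℝ))]
    push_cast [Nat.cast_sub hone]
    push_cast at I1 I2
    have hq : (0 : ℝ) ≤ (3 / 4 : ℝ) ^ n := by positivity
    have e3 : (2 : ℝ) ^ (n + 2 + 1) = 8 * 2 ^ n := by ring
    have e4 : (2 : ℝ) ^ (n + 2) = 4 * 2 ^ n := by ring
    have e5 : (2 : ℝ) ^ (n + 1) = 2 * 2 ^ n := by ring
    have e6 : (3 / 4 : ℝ) ^ (n + 2) = 9 / 16 * (3 / 4) ^ n := by ring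
    have e7 : (3 / 4 : ℝ) ^ (n + 1) = 3 / 4 * (3 / 4) ^ n := by ring
    rw [e3, e4, e6]
    rw [e5, e7] at I2
    nlinarith [I1, I2, key]

private lemma lower_bound : ∀ h t : ℕ,
    4 / 3 * (h : ℝ) * 2 ^ h - 2 ^ h + 1 ≤ (P h t : ℝ) := by
  apply twoStep (Q := fun h => ∀ t : ℕ, 4 / 3 * (h : ℝ) * 2 ^ h - 2 ^ h + 1 ≤ (P h t : ℝ))
  · intro t
    rw [hP0 t]
    have : (0 : ℝ) ≤ (Path (t + 1) : ℝ) := Nat.cast_nonneg _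
    push_cast
    norm_num
  · intro t
    rw [hP1 t]
    push_cast
    have : (0 : ℝ) ≤ (t : ℝ) := Nat.cast_nonneg t
    have : (0 : ℝ) ≤ (Path t : ℝ) := Nat.cast_nonneg _
    norm_num
    nlinarith
  · intro n IH1 IH2 t
    rw [hPrec (n + 2) t (by omega)]
    have e2 : n + 2 - 2 = n := by omega
    have e1 : n + 2 - 1 = n + 1 := by omega
    rw [e2, e1]
    have hone : (1 : ℕ) ≤ 2 ^ (n + 2 + 1) := Nat.one_le_two_pow
    have I1 := IH1 0
    have I2 := IH2 (t + 1)
    push_cast [Nat.cast_sub hone]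
    push_cast at I1 I2
    have hx : (0 : ℝ) < 2 ^ n := by positivity
    have e3 : (2 : ℝ) ^ (n + 2 + 1) = 8 * 2 ^ n := by ring
    have e4 : (2 : ℝ) ^ (n + 2) = 4 * 2 ^ n := by ring
    have e5 : (2 : ℝ) ^ (n + 1) = 2 * 2 ^ n := by ring
    rw [e3, e4]
    rw [e5] at I2
    have ht : (0 : ℝ) ≤ (t : ℝ) := Nat.cast_nonneg t
    nlinarith [I1, I2]

end Main

/-- If `P` satisfies `P(0,t) = Path(t+1)`, `P(1,t) = 5 + t + Path(t)` and
`P(h,t) = (2^(h+1) - 1) + t + 2·P(h-2,0) + P(h-1,t+1)` for `h ≥ 2`, where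
`Path(t) = (t+1)·⌈log₂(t+1)⌉ - 2^⌈log₂(t+1)⌉ + 1`, then for a suitable absolute
constant `C > 0` we have
`P(h,t) ≤ (4/3)·h·2^h + (C/√h)·h·2^h + f(h+t) + h·t` for all `h, t ≥ 0`,
where `f(n) = Path(n+1) + 5`; in particular `P(h,0) = (1 + o(1))·(4/3)·h·2^h`. -/
theorem binary_tree_upper_bound (Path : ℕ → ℕ)
    (hPath : ∀ t, Path t = (t + 1) * Nat.clog 2 (t + 1) - 2 ^ Nat.clog 2 (t + 1) + 1)
    (P : ℕ → ℕ → ℕ)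
    (hP0 : ∀ t, P 0 t = Path (t + 1))
    (hP1 : ∀ t, P 1 t = 5 + t + Path t)
    (hPrec : ∀ h t, 2 ≤ h → P h t = (2 ^ (h + 1) - 1) + t + 2 * P (h - 2) 0 + P (h - 1) (t + 1)) :
    (∃ C : ℝ, 0 < C ∧ ∀ h t : ℕ,
      (P h t : ℝ) ≤ (4 / 3) * h * 2 ^ h + (C / Real.sqrt h) * h * 2 ^ h
        + ((Path (h + t + 1) : ℝ) + 5) + h * t) ∧
    Tendsto (fun h : ℕ => (P h 0 : ℝ) / ((4 / 3) * h * 2 ^ h)) atTop (nhds 1) := by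
  have hup := upper_bound Path hPath P hP0 hP1 hPrec
  have hlo := lower_bound Path hPath P hP0 hP1 hPrec
  have hple := path_le_real Path hPath
  have hpow9 := pow9
  constructor
  · refine ⟨300, by norm_num, fun h t => ?_⟩
    rcases Nat.eq_zero_or_pos h with rfl | hh
    · rw [hP0 t]
      push_cast
      norm_num
    · have hN1 : (1 : ℝ) ≤ (h : ℝ) := by exact_mod_cast hh
      have hsp : (0 : ℝ) < Real.sqrt h := Real.sqrt_pos.mpr (by linarith)
      have hs1 : (1 : ℝ) ≤ Real.sqrt h := Real.one_le_sqrt.mpr hN1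
      have hss : Real.sqrt h * Real.sqrt h = (h : ℝ) := Real.mul_self_sqrt (by linarith)
      have hx : (0 : ℝ) < 2 ^ h := by positivity
      have hq : (0 : ℝ) ≤ (3 / 4 : ℝ) ^ h := by positivity
      have hEq : (300 / Real.sqrt h) * (h : ℝ) = 300 * Real.sqrt h := by
        rw [div_mul_eq_mul_div, div_eq_iff hsp.ne']
        nlinarith [hss]
      have key := hup h t
      calc (P h t : ℝ) ≤ 4 / 3 * h * 2 ^ h + (300 - 300 * (3 / 4 : ℝ) ^ h) * 2 ^ h
            + (Path (h + t + 1) : ℝ) + 5 + h * t := key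
        _ ≤ (4 / 3) * h * 2 ^ h + (300 / Real.sqrt h) * h * 2 ^ h
            + ((Path (h + t + 1) : ℝ) + 5) + h * t := by
          rw [hEq]
          nlinarith [hq, hx, hs1, mul_le_mul_of_nonneg_left hs1 hx.le,
            mul_nonneg hq hx.le]
  · have hsq : Tendsto (fun h : ℕ => Real.sqrt h) atTop atTop := by
      apply tendsto_atTop_atTop.mpr
      intro b
      refine ⟨⌈b ^ 2⌉₊, fun h hh => ?_⟩
      have h1 : ((⌈b ^ 2⌉₊ : ℕ) : ℝ) ≤ (h : ℝ) := Nat.cast_le.mpr hh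
      have hb2 : b ^ 2 ≤ (h : ℝ) := le_trans (Nat.le_ceil _) h1
      calc b ≤ |b| := le_abs_self b
        _ = Real.sqrt (b ^ 2) := (Real.sqrt_sq_eq_abs b).symm
        _ ≤ Real.sqrt h := Real.sqrt_le_sqrt hb2
    have hinv : Tendsto (fun h : ℕ => 1000 / Real.sqrt h) atTop (nhds 0) := by
      have h1 := hsq.inv_tendsto_atTop
      have h2 := h1.const_mul (1000 : ℝ)
      simpa [div_eq_mul_inv] using h2
    have hbound : ∀ᶠ h : ℕ in atTop,
        ‖(P h 0 : ℝ) / ((4 / 3) * h * 2 ^ h) - 1‖ ≤ 1000 / Real.sqrt h := by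
      filter_upwards [eventually_ge_atTop 1] with h hh
      have hN1 : (1 : ℝ) ≤ (h : ℝ) := by exact_mod_cast hh
      have hx : (0 : ℝ) < 2 ^ h := by positivity
      have hD : (0 : ℝ) < 4 / 3 * (h : ℝ) * 2 ^ h :=
        mul_pos (mul_pos (by norm_num) (by linarith)) hx
      have hu := hup h 0
      have hl := hlo h 0
      have hp9 : ((h : ℝ) + 2) ^ 2 ≤ 9 * 2 ^ h := by exact_mod_cast hpow9 h
      have hPb : (Path (h + 0 + 1) : ℝ) ≤ 9 * 2 ^ h + 1 := by
        have := hple (h + 0 + 1)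
        push_cast at this
        nlinarith [this, hp9]
      have hq : (0 : ℝ) ≤ (3 / 4 : ℝ) ^ h := by positivity
      have hqx : (0 : ℝ) ≤ (3 / 4 : ℝ) ^ h * 2 ^ h := by positivity
      have habs : |(P h 0 : ℝ) - 4 / 3 * h * 2 ^ h| ≤ 315 * 2 ^ h := by
        rw [abs_le]
        constructor
        · nlinarith [hl, hx]
        · push_cast at hu
          nlinarith [hu, hPb, hqx, hx]
      have hsp : (0 : ℝ) < Real.sqrt h := Real.sqrt_pos.mpr (by linarith)
      have hs1 : (1 : ℝ) ≤ Real.sqrt h := Real.one_le_sqrt.mpr hN1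
      have hss : Real.sqrt h * Real.sqrt h = (h : ℝ) := Real.mul_self_sqrt (by linarith)
      have hsleN : Real.sqrt h ≤ (h : ℝ) := by nlinarith [hss, hs1]
      rw [show (P h 0 : ℝ) / ((4 / 3) * h * 2 ^ h) - 1
          = ((P h 0 : ℝ) - 4 / 3 * h * 2 ^ h) / (4 / 3 * h * 2 ^ h) by
        field_simp]
      rw [Real.norm_eq_abs, abs_div, abs_of_pos hD, div_le_div_iff₀ hD hsp]
      have h1 : |(P h 0 : ℝ) - 4 / 3 * h * 2 ^ h| * Real.sqrt h ≤ 315 * 2 ^ h * Real.sqrt h :=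
        mul_le_mul_of_nonneg_right habs hsp.le
      have h2 : 2 ^ h * Real.sqrt h ≤ 2 ^ h * (h : ℝ) :=
        mul_le_mul_of_nonneg_left hsleN hx.le
      have h3 : (0 : ℝ) ≤ 2 ^ h * (h : ℝ) := by positivity
      linarith [h1, h2, h3]
    have hten0 : Tendsto (fun h : ℕ => (P h 0 : ℝ) / ((4 / 3) * h * 2 ^ h) - 1) atTop (nhds 0) :=
      squeeze_zero_norm' hbound hinv
    have := hten0.add_const 1
    simpa using this
end
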